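/- If b1 > b2 ≥ |t|/2 are both borders of a string t and p is the shortest period of t, then b1 - b2 is a multiple of p. -/

import Mathlib

/-- `p` is a period of the string (list) `w`. -/
def IsPeriod {α : Type*} (w : List α) (p : ℕ) : Prop :=
  1 ≤ p ∧ ∀ i, i + p < w.length → w[i]? = w[i + p]?

/-- `b` is a (proper) border of `w`. -/
def IsBorder {α : Type*} (w : List α) (b : ℕ) : Prop :=
  b < w.length ∧ w.take b = w.drop (w.length - b)

lemma isPeriod_of_isBorder {α : Type*} {w : List α} {b : ℕ} (h : IsBorder w b) :
    IsPeriod w (w.length - b) := by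
  obtain ⟨hb, heq⟩ := h
  refine ⟨by omega, fun i hi => ?_⟩
  have hib : i < b := by omega
  have h1 : (w.take b)[i]? = w[i]? := List.getElem?_take_of_lt hib
  have h2 : (w.drop (w.length - b))[i]? = w[w.length - b + i]? := List.getElem?_drop
  rw [heq] at h1
  rw [← h1, h2, Nat.add_comm]

lemma isPeriod_sub {α : Type*} {w : List α} {p q : ℕ} (hp : IsPeriod w p) (hq : IsPeriod w q)
    (hlt : p < q) (hle : p + q ≤ w.length) : IsPeriod w (q - p) := by
  obtain ⟨hp1, hpP⟩ := hp
  obtain ⟨hq1, hqP⟩ := hq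
  refine ⟨by omega, fun i hi => ?_⟩
  by_cases h : i + q < w.length
  · have e1 := hpP (i + (q - p)) (by omega)
    have e2 := hqP i h
    rw [show i + (q - p) + p = i + q by omega] at e1
    exact e2.trans e1.symm
  · have hip : p ≤ i := by omega
    have e1 := hpP (i - p) (by omega)
    have e2 := hqP (i - p) (by omega)
    rw [show i - p + p = i by omega] at e1
    rw [show i - p + q = i + (q - p) by omega] at e2
    rw [← e1, e2]

lemma min_period_dvd {α : Type*} {w : List α} {p : ℕ} (hp : IsPeriod w p)
    (hmin : ∀ q, IsPeriod w q → p ≤ q) :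
    ∀ q, IsPeriod w q → p + q ≤ w.length → p ∣ q := by
  intro q
  induction q using Nat.strong_induction_on with
  | _ q ih =>
    intro hq hle
    have hp1 : 1 ≤ p := hp.1
    have hpq : p ≤ q := hmin q hq
    rcases eq_or_lt_of_le hpq with h | h
    · exact h ▸ dvd_refl p
    · have hsub := isPeriod_sub hp hq h hle
      obtain ⟨k, hk⟩ := ih (q - p) (by omega) hsub (by omega)
      exact ⟨k + 1, by rw [Nat.mul_add, Nat.mul_one]; omega⟩

/-- If `b1 > b2 ≥ |t|/2` are both borders of `t` and `p` is the shortest period of `t`,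
then `b1 - b2` is a multiple of `p`. -/
theorem long_borders_diff_multiple {α : Type*} (t : List α) (b1 b2 p : ℕ)
    (h1 : IsBorder t b1) (h2 : IsBorder t b2) (hgt : b2 < b1)
    (hlong : t.length ≤ 2 * b2)
    (hp : IsPeriod t p) (hmin : ∀ q, IsPeriod t q → p ≤ q) :
    p ∣ b1 - b2 := by
  set n := t.length with hn
  have hb1 : b1 < n := h1.1
  have hb2 : b2 < n := h2.1
  have hq1 := isPeriod_of_isBorder h1
  have hq2 := isPeriod_of_isBorder h2
  have hpq1 : p ≤ n - b1 := hmin _ hq1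
  have hd1 : p ∣ n - b1 := min_period_dvd hp hmin _ hq1 (by omega)
  have hd2 : p ∣ n - b2 := min_period_dvd hp hmin _ hq2 (by omega)
  have : p ∣ (n - b2) - (n - b1) := Nat.dvd_sub hd2 hd1
  rwa [show (n - b2) - (n - b1) = b1 - b2 by omega] at this
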